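/- Let β > 0, let J ∈ C¹(ℝ^N) be nonnegative, even, supported in the closed unit ball with ∫ J = 1, let g ∈ C¹(ℝ) satisfy |g(s)| ≤ a for all s with g' globally Lipschitz with constant k₁ and k₂ := |g'(0)|, and let h : ℝ → [0,h*) be continuous. Suppose u : ℝ×ℝ^N → ℝ is measurable and satisfies, for all (t,x), u(t,x) = ∫_{−∞}^t e^{−(t−s)} g(β(J*u)(s,x) + β h(s)) ds. Then for each t ∈ ℝ the function x ↦ u(t,x) is continuously differentiable, and for every i = 1,…,N and all (t,x), |∂_{x_i} u(t,x)| ≤ a β ‖∂_i J‖_{L^1(ℝ^N)} (k₁ β (a + h*) + k₂). In particular, every section of the pullback attractor is a bounded set in C¹. -/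

import Mathlib

open MeasureTheory Set
open scoped ENNReal Convolution

noncomputable section

abbrev Euc (N : ℕ) := EuclideanSpace ℝ (Fin N)

/-- Weighted `L^p` norm `(∫ ρ |u|^p)^{1/p}`. -/
def wnorm {N : ℕ} (p : ℝ) (ρ u : Euc N → ℝ) : ℝ :=
  (∫ x, ρ x * |u x| ^ p) ^ (1 / p)

/-- Convolution `(J*u)(x) = ∫ J(x-y) u(y) dy`. -/
def conv {N : ℕ} (J u : Euc N → ℝ) (x : Euc N) : ℝ :=
  ∫ y, J (x - y) * u y

/-- The `i`-th partial derivative of `J`. -/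
def pderiv {N : ℕ} (J : Euc N → ℝ) (i : Fin N) (y : Euc N) : ℝ :=
  fderiv ℝ J y (EuclideanSpace.single i (1 : ℝ))

namespace Stmt13Aux

lemma expker_eq (t : ℝ) : (fun s : ℝ => Real.exp (-(t - s))) = fun s => Real.exp s * Real.exp (-t) := by
  funext s; rw [← Real.exp_add]; ring_nf

lemma expker_int (t : ℝ) : IntegrableOn (fun s => Real.exp (-(t - s))) (Iic t) := by
  rw [expker_eq]
  exact (integrableOn_exp_Iic t).mul_const _

lemma expker_one (t : ℝ) : ∫ s in Iic t, Real.exp (-(t - s)) = 1 := by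
  rw [expker_eq, integral_mul_const, integral_exp_Iic, ← Real.exp_add]
  simp

variable {N : ℕ}

lemma J_cs {J : Euc N → ℝ} (hJsupp : ∀ x : Euc N, 1 < ‖x‖ → J x = 0) :
    HasCompactSupport J := by
  apply HasCompactSupport.intro (isCompact_closedBall (0 : Euc N) 1)
  intro x hx
  exact hJsupp x (by simpa [Metric.mem_closedBall, dist_zero_right, not_le] using hx)

/-- The derivative of the convolution. -/
def cP (J : Euc N → ℝ) (v : Euc N → ℝ) (x : Euc N) : Euc N →L[ℝ] ℝ :=
  ∫ y, v y • fderiv ℝ J (x - y)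

lemma precompR_lsmul_apply (c : ℝ) (A : Euc N →L[ℝ] ℝ) :
    ((ContinuousLinearMap.lsmul ℝ ℝ).precompR (Euc N)) c A = c • A := by
  ext v; simp

lemma conv_eq_convolution (J v : Euc N → ℝ) :
    conv J v = (v ⋆[ContinuousLinearMap.lsmul ℝ ℝ, volume] J) := by
  funext x; simp [conv, convolution_def, mul_comm]

lemma convolution_fderiv_eq_cP (J v : Euc N → ℝ) (x : Euc N) :
    (v ⋆[(ContinuousLinearMap.lsmul ℝ ℝ).precompR (Euc N), volume] fderiv ℝ J) x = cP J v x := by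
  simp only [convolution_def, precompR_lsmul_apply, cP]

variable {J v : Euc N → ℝ} {a : ℝ}

lemma v_loc (hv : Measurable v) (hvb : ∀ y, |v y| ≤ a) : LocallyIntegrable v volume :=
  (memLp_top_of_bound hv.aestronglyMeasurable a
    (Filter.Eventually.of_forall fun y => by simpa [Real.norm_eq_abs] using hvb y)).locallyIntegrable
    le_top

lemma hasFDerivAt_conv (hJC1 : ContDiff ℝ 1 J) (hJcs : HasCompactSupport J)
    (hv : Measurable v) (hvb : ∀ y, |v y| ≤ a) (x : Euc N) :
    HasFDerivAt (conv J v) (cP J v x) x := by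
  have := hJcs.hasFDerivAt_convolution_right (ContinuousLinearMap.lsmul ℝ ℝ)
    (v_loc hv hvb) hJC1 x
  rw [convolution_fderiv_eq_cP] at this
  rw [conv_eq_convolution]
  exact this

lemma contDiff_conv (hJC1 : ContDiff ℝ 1 J) (hJcs : HasCompactSupport J)
    (hv : Measurable v) (hvb : ∀ y, |v y| ≤ a) : ContDiff ℝ 1 (conv J v) := by
  rw [conv_eq_convolution]
  exact hJcs.contDiff_convolution_right (ContinuousLinearMap.lsmul ℝ ℝ) (v_loc hv hvb) hJC1

lemma continuous_cP (hJC1 : ContDiff ℝ 1 J) (hJcs : HasCompactSupport J)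
    (hv : Measurable v) (hvb : ∀ y, |v y| ≤ a) : Continuous (cP J v) := by
  have heq : cP J v = fderiv ℝ (conv J v) :=
    funext fun x => ((hasFDerivAt_conv hJC1 hJcs hv hvb x).fderiv).symm
  rw [heq]
  exact (contDiff_conv hJC1 hJcs hv hvb).continuous_fderiv one_ne_zero


lemma conv_abs_le (hJcont : Continuous J) (hJcs : HasCompactSupport J) (hJnn : ∀ y, 0 ≤ J y)
    (hJ1 : ∫ y, J y = 1) (ha : 0 ≤ a) (hvb : ∀ y, |v y| ≤ a) (x : Euc N) :
    |conv J v x| ≤ a := by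
  have hJint : Integrable J volume := hJcont.integrable_of_hasCompactSupport hJcs
  have hJxint : Integrable (fun y => J (x - y)) volume :=
    (integrable_comp_sub_left J x).mpr hJint
  calc |conv J v x| = ‖∫ y, J (x - y) * v y‖ := (Real.norm_eq_abs _).symm
    _ ≤ ∫ y, ‖J (x - y) * v y‖ := norm_integral_le_integral_norm _
    _ ≤ ∫ y, J (x - y) * a := by
        apply integral_mono_of_nonneg (Filter.Eventually.of_forall fun y => norm_nonneg _)
          (hJxint.mul_const a)
        refine Filter.Eventually.of_forall fun y => ?_
        dsimp only
        rw [norm_mul, Real.norm_eq_abs, Real.norm_eq_abs, abs_of_nonneg (hJnn _)]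
        exact mul_le_mul_of_nonneg_left (hvb y) (hJnn _)
    _ = (∫ y, J (x - y)) * a := integral_mul_const _ _
    _ = a := by rw [integral_sub_left_eq_self J volume x, hJ1, one_mul]

lemma cP_integrand_integrable (hJC1 : ContDiff ℝ 1 J) (hJcs : HasCompactSupport J)
    (hv : Measurable v) (hvb : ∀ y, |v y| ≤ a) (x : Euc N) :
    Integrable (fun y => v y • fderiv ℝ J (x - y)) volume := by
  have hJ'cont : Continuous (fderiv ℝ J) := hJC1.continuous_fderiv one_ne_zero
  have hJ'cs : HasCompactSupport (fderiv ℝ J) := hJcs.fderiv (𝕜 := ℝ)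
  have hbint : Integrable (fun y => a * ‖fderiv ℝ J (x - y)‖) volume := by
    have : Integrable (fun y => ‖fderiv ℝ J y‖) volume :=
      hJ'cont.norm.integrable_of_hasCompactSupport hJ'cs.norm
    exact ((integrable_comp_sub_left (fun y => ‖fderiv ℝ J y‖) x).mpr this).const_mul a
  refine Integrable.mono' hbint ?_ ?_
  · exact hv.aestronglyMeasurable.smul
      ((hJ'cont.comp (continuous_const.sub continuous_id)).aestronglyMeasurable)
  · refine Filter.Eventually.of_forall fun y => ?_
    rw [norm_smul, Real.norm_eq_abs]
    exact mul_le_mul_of_nonneg_right (hvb y) (norm_nonneg _)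

lemma norm_cP_le (hJC1 : ContDiff ℝ 1 J) (hJcs : HasCompactSupport J)
    (hv : Measurable v) (hvb : ∀ y, |v y| ≤ a) (x : Euc N) :
    ‖cP J v x‖ ≤ a * ∫ y, ‖fderiv ℝ J y‖ := by
  have hJ'cont : Continuous (fderiv ℝ J) := hJC1.continuous_fderiv one_ne_zero
  have hJ'cs : HasCompactSupport (fderiv ℝ J) := hJcs.fderiv (𝕜 := ℝ)
  have hnint : Integrable (fun y => ‖fderiv ℝ J y‖) volume :=
    hJ'cont.norm.integrable_of_hasCompactSupport hJ'cs.norm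
  calc ‖cP J v x‖ ≤ ∫ y, ‖v y • fderiv ℝ J (x - y)‖ := norm_integral_le_integral_norm _
    _ ≤ ∫ y, a * ‖fderiv ℝ J (x - y)‖ := by
        apply integral_mono_of_nonneg (Filter.Eventually.of_forall fun y => norm_nonneg _)
          (((integrable_comp_sub_left (fun y => ‖fderiv ℝ J y‖) x).mpr hnint).const_mul a)
        refine Filter.Eventually.of_forall fun y => ?_
        dsimp only
        rw [norm_smul, Real.norm_eq_abs]
        exact mul_le_mul_of_nonneg_right (hvb y) (norm_nonneg _)
    _ = a * ∫ y, ‖fderiv ℝ J (x - y)‖ := integral_const_mul _ _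
    _ = a * ∫ y, ‖fderiv ℝ J y‖ := by
        rw [integral_sub_left_eq_self (fun y => ‖fderiv ℝ J y‖) volume x]

lemma cP_apply (hJC1 : ContDiff ℝ 1 J) (hJcs : HasCompactSupport J)
    (hv : Measurable v) (hvb : ∀ y, |v y| ≤ a) (x : Euc N) (e : Euc N) :
    cP J v x e = ∫ y, v y * fderiv ℝ J (x - y) e := by
  rw [cP, ContinuousLinearMap.integral_apply (cP_integrand_integrable hJC1 hJcs hv hvb x)]
  simp

lemma abs_cP_single_le (hJC1 : ContDiff ℝ 1 J) (hJcs : HasCompactSupport J)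
    (hv : Measurable v) (hvb : ∀ y, |v y| ≤ a) (x : Euc N) (i : Fin N) :
    |cP J v x (EuclideanSpace.single i (1 : ℝ))| ≤ a * ∫ y, |pderiv J i y| := by
  have hJ'cont : Continuous (fderiv ℝ J) := hJC1.continuous_fderiv one_ne_zero
  have hJ'cs : HasCompactSupport (fderiv ℝ J) := hJcs.fderiv (𝕜 := ℝ)
  have hpcont : Continuous (pderiv J i) :=
    hJ'cont.clm_apply continuous_const
  have hpcs : HasCompactSupport (pderiv J i) := by
    have : pderiv J i = (fun A : Euc N →L[ℝ] ℝ => A (EuclideanSpace.single i (1:ℝ))) ∘ fderiv ℝ J :=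
      rfl
    rw [this]
    exact hJ'cs.comp_left rfl
  have hpint : Integrable (fun y => |pderiv J i y|) volume :=
    (hpcont.abs.integrable_of_hasCompactSupport hpcs.abs)
  rw [cP_apply hJC1 hJcs hv hvb x]
  calc |∫ y, v y * fderiv ℝ J (x - y) (EuclideanSpace.single i (1:ℝ))|
      = ‖∫ y, v y * fderiv ℝ J (x - y) (EuclideanSpace.single i (1:ℝ))‖ :=
        (Real.norm_eq_abs _).symm
    _ ≤ ∫ y, ‖v y * fderiv ℝ J (x - y) (EuclideanSpace.single i (1:ℝ))‖ :=
        norm_integral_le_integral_norm _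
    _ ≤ ∫ y, a * |pderiv J i (x - y)| := by
        apply integral_mono_of_nonneg (Filter.Eventually.of_forall fun y => norm_nonneg _)
          (((integrable_comp_sub_left (fun y => |pderiv J i y|) x).mpr hpint).const_mul a)
        refine Filter.Eventually.of_forall fun y => ?_
        dsimp only
        rw [norm_mul, Real.norm_eq_abs, Real.norm_eq_abs]
        exact mul_le_mul (hvb y) le_rfl (abs_nonneg _) ((abs_nonneg _).trans (hvb y))
    _ = a * ∫ y, |pderiv J i (x - y)| := integral_const_mul _ _
    _ = a * ∫ y, |pderiv J i y| := by
        rw [integral_sub_left_eq_self (fun y => |pderiv J i y|) volume x]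

end Stmt13Aux

set_option maxHeartbeats 1000000 in
theorem stmt13 {N : ℕ} (β : ℝ) (hβ : 0 < β)
    (J : Euc N → ℝ) (hJC1 : ContDiff ℝ 1 J) (hJnn : ∀ x, 0 ≤ J x)
    (hJeven : ∀ x, J (-x) = J x)
    (hJsupp : ∀ x : Euc N, 1 < ‖x‖ → J x = 0) (hJ1 : ∫ x, J x = 1)
    (g : ℝ → ℝ) (hgC1 : ContDiff ℝ 1 g) (a : ℝ) (hga : ∀ s, |g s| ≤ a)
    (k₁ : ℝ) (hg'Lip : ∀ s₁ s₂, |deriv g s₁ - deriv g s₂| ≤ k₁ * |s₁ - s₂|)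
    (k₂ : ℝ) (hk₂ : k₂ = |deriv g 0|)
    (hstar : ℝ) (h : ℝ → ℝ) (hhc : Continuous h) (hh : ∀ t, h t ∈ Ico (0 : ℝ) hstar)
    (u : ℝ → Euc N → ℝ) (hum : Measurable (Function.uncurry u))
    (hsol : ∀ t x, u t x =
      ∫ s in Iic t, Real.exp (-(t - s)) * g (β * conv J (u s) x + β * h s)) :
    ∀ t : ℝ, ContDiff ℝ 1 (u t) ∧
      ∀ i : Fin N, ∀ x : Euc N,
        |fderiv ℝ (u t) x (EuclideanSpace.single i (1 : ℝ))| ≤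
          a * β * (∫ y, |pderiv J i y|) * (k₁ * β * (a + hstar) + k₂) := by
  intro t
  have ha : 0 ≤ a := (abs_nonneg _).trans (hga 0)
  have hk₁ : 0 ≤ k₁ := by
    have h1 := hg'Lip 1 0
    have h0 : (0:ℝ) ≤ k₁ * |(1:ℝ) - 0| := (abs_nonneg _).trans h1
    simpa using h0
  have hk₂0 : 0 ≤ k₂ := hk₂ ▸ abs_nonneg _
  have hstar0 : 0 ≤ hstar := ((hh 0).1.trans_lt (hh 0).2).le
  have hJcont := hJC1.continuous
  have hJcs : HasCompactSupport J := Stmt13Aux.J_cs hJsupp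
  have hJ'cont : Continuous (fderiv ℝ J) := hJC1.continuous_fderiv one_ne_zero
  have humeas : ∀ s, Measurable (u s) := fun s => hum.comp measurable_prodMk_left
  -- boundedness of u
  have hub : ∀ s x, |u s x| ≤ a := by
    intro s x
    rw [hsol s x]
    calc |∫ σ in Iic s, Real.exp (-(s - σ)) * g (β * conv J (u σ) x + β * h σ)|
        = ‖∫ σ in Iic s, Real.exp (-(s - σ)) * g (β * conv J (u σ) x + β * h σ)‖ :=
          (Real.norm_eq_abs _).symm
      _ ≤ ∫ σ in Iic s, ‖Real.exp (-(s - σ)) * g (β * conv J (u σ) x + β * h σ)‖ :=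
          norm_integral_le_integral_norm _
      _ ≤ ∫ σ in Iic s, Real.exp (-(s - σ)) * a := by
          apply integral_mono_of_nonneg (Filter.Eventually.of_forall fun σ => norm_nonneg _)
            ((Stmt13Aux.expker_int s).mul_const a)
          refine Filter.Eventually.of_forall fun σ => ?_
          dsimp only
          rw [norm_mul, Real.norm_eq_abs, Real.norm_eq_abs, abs_of_pos (Real.exp_pos _)]
          exact mul_le_mul_of_nonneg_left (hga _) (Real.exp_pos _).le
      _ = (∫ σ in Iic s, Real.exp (-(s - σ))) * a := integral_mul_const _ _
      _ = a := by rw [Stmt13Aux.expker_one, one_mul]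
  have hconvb : ∀ s x, |conv J (u s) x| ≤ a := fun s x =>
    Stmt13Aux.conv_abs_le hJcont hJcs hJnn hJ1 ha (hub s) x
  -- bound for the argument of g
  have hxib : ∀ s x, |β * conv J (u s) x + β * h s| ≤ β * (a + hstar) := by
    intro s x
    have h1 : |β * conv J (u s) x| ≤ β * a := by
      rw [abs_mul, abs_of_pos hβ]
      exact mul_le_mul_of_nonneg_left (hconvb s x) hβ.le
    have h2 : |β * h s| ≤ β * hstar := by
      rw [abs_mul, abs_of_pos hβ, abs_of_nonneg (hh s).1]
      exact mul_le_mul_of_nonneg_left (hh s).2.le hβ.le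
    calc |β * conv J (u s) x + β * h s| ≤ |β * conv J (u s) x| + |β * h s| := abs_add_le _ _
      _ ≤ β * a + β * hstar := add_le_add h1 h2
      _ = β * (a + hstar) := by ring
  set M : ℝ := k₁ * (β * (a + hstar)) + k₂ with hM
  have hMnn : 0 ≤ M :=
    add_nonneg (mul_nonneg hk₁ (mul_nonneg hβ.le (add_nonneg ha hstar0))) hk₂0
  have hdgb : ∀ s x, |deriv g (β * conv J (u s) x + β * h s)| ≤ M := by
    intro s x
    have hl := hg'Lip (β * conv J (u s) x + β * h s) 0
    have h2 : |deriv g (β * conv J (u s) x + β * h s)| - |deriv g 0| ≤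
        |deriv g (β * conv J (u s) x + β * h s) - deriv g 0| := abs_sub_abs_le_abs_sub _ _
    have h3 : k₁ * |β * conv J (u s) x + β * h s - 0| ≤ k₁ * (β * (a + hstar)) := by
      rw [sub_zero]
      exact mul_le_mul_of_nonneg_left (hxib s x) hk₁
    rw [hM, hk₂]
    linarith
  set K : ℝ := ∫ y, ‖fderiv ℝ J y‖ with hK
  have hKnn : 0 ≤ K := integral_nonneg fun y => norm_nonneg _
  -- measurability in time
  have hconvmeas : ∀ x : Euc N, StronglyMeasurable fun s => conv J (u s) x := by
    intro x
    have h1 : Measurable fun p : ℝ × Euc N => J (x - p.2) * u p.1 p.2 :=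
      ((hJcont.comp (continuous_const.sub continuous_snd)).measurable).mul hum
    exact h1.stronglyMeasurable.integral_prod_right'
  have hximeas : ∀ x : Euc N, Measurable fun s => β * conv J (u s) x + β * h s := fun x =>
    (measurable_const.mul (hconvmeas x).measurable).add (measurable_const.mul hhc.measurable)
  have hcPmeas : ∀ x : Euc N, StronglyMeasurable fun s => Stmt13Aux.cP J (u s) x := by
    intro x
    have h1 : StronglyMeasurable fun p : ℝ × Euc N => u p.1 p.2 • fderiv ℝ J (x - p.2) :=
      hum.stronglyMeasurable.smul
        ((hJ'cont.comp (continuous_const.sub continuous_snd)).stronglyMeasurable)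
    exact h1.integral_prod_right'
  have hexpmeas : Measurable fun s : ℝ => Real.exp (-(t - s)) :=
    (Real.continuous_exp.comp (continuous_const.sub continuous_id).neg).measurable
  -- the derivative candidate
  set F' : Euc N → ℝ → (Euc N →L[ℝ] ℝ) := fun x s =>
    Real.exp (-(t - s)) •
      ((deriv g (β * conv J (u s) x + β * h s)) • (β • Stmt13Aux.cP J (u s) x)) with hF'def
  have hdiff : ∀ (s : ℝ) (x : Euc N), HasFDerivAt
      (fun x' => Real.exp (-(t - s)) * g (β * conv J (u s) x' + β * h s)) (F' x s) x := by
    intro s x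
    have hc : HasFDerivAt (conv J (u s)) (Stmt13Aux.cP J (u s) x) x :=
      Stmt13Aux.hasFDerivAt_conv hJC1 hJcs (humeas s) (hub s) x
    have hφ : HasFDerivAt (fun x' => β * conv J (u s) x' + β * h s)
        (β • Stmt13Aux.cP J (u s) x) x := (hc.const_mul β).add_const _
    have hg' : HasDerivAt g (deriv g (β * conv J (u s) x + β * h s))
        (β * conv J (u s) x + β * h s) := ((hgC1.differentiable one_ne_zero) _).hasDerivAt
    exact (hg'.comp_hasFDerivAt x hφ).const_mul _
  have hF'norm : ∀ (s : ℝ) (x : Euc N),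
      ‖F' x s‖ ≤ Real.exp (-(t - s)) * (M * (β * (a * K))) := by
    intro s x
    have hcple := Stmt13Aux.norm_cP_le hJC1 hJcs (humeas s) (hub s) x
    have hdg := hdgb s x
    simp only [hF'def]
    have e1 : ‖Real.exp (-(t - s)) •
        ((deriv g (β * conv J (u s) x + β * h s)) • (β • Stmt13Aux.cP J (u s) x))‖ ≤
        ‖Real.exp (-(t - s))‖ *
        ‖(deriv g (β * conv J (u s) x + β * h s)) • (β • Stmt13Aux.cP J (u s) x)‖ :=
      (norm_smul (Real.exp (-(t - s)))
        ((deriv g (β * conv J (u s) x + β * h s)) • (β • Stmt13Aux.cP J (u s) x))).le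
    have e2 : ‖(deriv g (β * conv J (u s) x + β * h s)) • (β • Stmt13Aux.cP J (u s) x)‖ ≤
        ‖deriv g (β * conv J (u s) x + β * h s)‖ * ‖β • Stmt13Aux.cP J (u s) x‖ :=
      (norm_smul (deriv g (β * conv J (u s) x + β * h s))
        (β • Stmt13Aux.cP J (u s) x)).le
    have e3 : ‖β • Stmt13Aux.cP J (u s) x‖ ≤ ‖β‖ * ‖Stmt13Aux.cP J (u s) x‖ :=
      (norm_smul β (Stmt13Aux.cP J (u s) x)).le
    have hne : ‖Real.exp (-(t - s))‖ = Real.exp (-(t - s)) :=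
      Real.norm_of_nonneg (Real.exp_pos _).le
    have hnb : ‖β‖ = β := Real.norm_of_nonneg hβ.le
    have hb1 : ‖deriv g (β * conv J (u s) x + β * h s)‖ ≤ M := by
      rw [Real.norm_eq_abs]; exact hdg
    calc ‖Real.exp (-(t - s)) •
        ((deriv g (β * conv J (u s) x + β * h s)) • (β • Stmt13Aux.cP J (u s) x))‖
        ≤ ‖Real.exp (-(t - s))‖ *
        ‖(deriv g (β * conv J (u s) x + β * h s)) • (β • Stmt13Aux.cP J (u s) x)‖ := e1
      _ ≤ ‖Real.exp (-(t - s))‖ * (‖deriv g (β * conv J (u s) x + β * h s)‖ *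
          (‖β‖ * ‖Stmt13Aux.cP J (u s) x‖)) :=
          mul_le_mul_of_nonneg_left
            (e2.trans (mul_le_mul_of_nonneg_left e3 (norm_nonneg _))) (norm_nonneg _)
      _ ≤ Real.exp (-(t - s)) * (M * (β * (a * K))) := by
          rw [hne, hnb]
          exact mul_le_mul_of_nonneg_left
            (mul_le_mul hb1 (mul_le_mul_of_nonneg_left hcple hβ.le)
              (mul_nonneg hβ.le (norm_nonneg _)) hMnn) (Real.exp_pos _).le
  have hbint : IntegrableOn (fun s => Real.exp (-(t - s)) * (M * (β * (a * K)))) (Iic t) :=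
    (Stmt13Aux.expker_int t).mul_const _
  have hFmeas : ∀ x : Euc N, AEStronglyMeasurable
      (fun s => Real.exp (-(t - s)) * g (β * conv J (u s) x + β * h s))
      (volume.restrict (Iic t)) := fun x =>
    (hexpmeas.mul ((hgC1.continuous.measurable).comp (hximeas x))).aestronglyMeasurable
  have hF'meas : ∀ x : Euc N, AEStronglyMeasurable (F' x) (volume.restrict (Iic t)) := by
    intro x
    apply StronglyMeasurable.aestronglyMeasurable
    apply hexpmeas.stronglyMeasurable.smul
    exact (((hgC1.continuous_deriv le_rfl).measurable.comp (hximeas x)).stronglyMeasurable).smul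
      ((hcPmeas x).const_smul β)
  have hFint : ∀ x : Euc N, Integrable
      (fun s => Real.exp (-(t - s)) * g (β * conv J (u s) x + β * h s))
      (volume.restrict (Iic t)) := by
    intro x
    refine Integrable.mono' ((Stmt13Aux.expker_int t).mul_const a) (hFmeas x) ?_
    refine Filter.Eventually.of_forall fun s => ?_
    rw [norm_mul, Real.norm_eq_abs, Real.norm_eq_abs, abs_of_pos (Real.exp_pos _)]
    exact mul_le_mul_of_nonneg_left (hga _) (Real.exp_pos _).le
  have hU : ∀ x₀ : Euc N, HasFDerivAt (u t) (∫ s in Iic t, F' x₀ s) x₀ := by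
    intro x₀
    have H := hasFDerivAt_integral_of_dominated_of_fderiv_le (𝕜 := ℝ)
      (F := fun x s => Real.exp (-(t - s)) * g (β * conv J (u s) x + β * h s)) (F' := F')
      (x₀ := x₀) (bound := fun s => Real.exp (-(t - s)) * (M * (β * (a * K))))
      (μ := volume.restrict (Iic t)) (Metric.ball_mem_nhds x₀ zero_lt_one)
      (Filter.Eventually.of_forall fun x => hFmeas x) (hFint x₀) (hF'meas x₀)
      (Filter.Eventually.of_forall fun s x _ => hF'norm s x) hbint
      (Filter.Eventually.of_forall fun s x _ => hdiff s x)
    have hfun : (fun x => ∫ s in Iic t,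
        Real.exp (-(t - s)) * g (β * conv J (u s) x + β * h s)) = u t :=
      funext fun x => (hsol t x).symm
    rwa [hfun] at H
  have hΦcont : Continuous fun x => ∫ s in Iic t, F' x s := by
    apply continuous_of_dominated (fun x => hF'meas x)
      (fun x => Filter.Eventually.of_forall fun s => hF'norm s x) hbint
    refine Filter.Eventually.of_forall fun s => ?_
    have hconvcont : Continuous (conv J (u s)) :=
      (Stmt13Aux.contDiff_conv hJC1 hJcs (humeas s) (hub s)).continuous
    have hxicont : Continuous fun x : Euc N => β * conv J (u s) x + β * h s :=
      (continuous_const.mul hconvcont).add continuous_const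
    have hcPcont := Stmt13Aux.continuous_cP hJC1 hJcs (humeas s) (hub s)
    exact ((((hgC1.continuous_deriv le_rfl).comp hxicont).smul
      (hcPcont.const_smul β))).const_smul (Real.exp (-(t - s)))
  have hfderiv : fderiv ℝ (u t) = fun x => ∫ s in Iic t, F' x s :=
    funext fun x => (hU x).fderiv
  refine ⟨?_, ?_⟩
  · rw [contDiff_one_iff_fderiv]
    exact ⟨fun x => (hU x).differentiableAt, by rw [hfderiv]; exact hΦcont⟩
  · intro i x
    have hKinn : (0:ℝ) ≤ ∫ y, |pderiv J i y| := integral_nonneg fun y => abs_nonneg _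
    have hF'int : Integrable (F' x) (volume.restrict (Iic t)) :=
      Integrable.mono' hbint (hF'meas x) (Filter.Eventually.of_forall fun s => hF'norm s x)
    have happ : ∀ s : ℝ, (F' x s) (EuclideanSpace.single i (1:ℝ)) =
        Real.exp (-(t - s)) * (deriv g (β * conv J (u s) x + β * h s) *
          (β * (Stmt13Aux.cP J (u s) x (EuclideanSpace.single i (1:ℝ))))) := by
      intro s
      simp only [hF'def, ContinuousLinearMap.coe_smul', Pi.smul_apply, smul_eq_mul]
    have hpt : ∀ s : ℝ, ‖(F' x s) (EuclideanSpace.single i (1:ℝ))‖ ≤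
        Real.exp (-(t - s)) * (M * (β * (a * ∫ y, |pderiv J i y|))) := by
      intro s
      rw [happ s, norm_mul, norm_mul, norm_mul, Real.norm_eq_abs, Real.norm_eq_abs,
        Real.norm_eq_abs, Real.norm_eq_abs, abs_of_pos (Real.exp_pos _), abs_of_pos hβ]
      have hcple := Stmt13Aux.abs_cP_single_le hJC1 hJcs (humeas s) (hub s) x i
      have hdg := hdgb s x
      have : |deriv g (β * conv J (u s) x + β * h s)| *
          (β * |Stmt13Aux.cP J (u s) x (EuclideanSpace.single i (1:ℝ))|)
          ≤ M * (β * (a * ∫ y, |pderiv J i y|)) := by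
        apply mul_le_mul hdg (mul_le_mul_of_nonneg_left hcple hβ.le)
          (mul_nonneg hβ.le (abs_nonneg _)) hMnn
      exact mul_le_mul_of_nonneg_left this (Real.exp_pos _).le
    rw [hfderiv]
    calc |(∫ s in Iic t, F' x s) (EuclideanSpace.single i (1:ℝ))|
        = ‖∫ s in Iic t, (F' x s) (EuclideanSpace.single i (1:ℝ))‖ := by
          rw [ContinuousLinearMap.integral_apply hF'int, Real.norm_eq_abs]
      _ ≤ ∫ s in Iic t, ‖(F' x s) (EuclideanSpace.single i (1:ℝ))‖ :=
          norm_integral_le_integral_norm _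
      _ ≤ ∫ s in Iic t, Real.exp (-(t - s)) * (M * (β * (a * ∫ y, |pderiv J i y|))) := by
          apply integral_mono_of_nonneg (Filter.Eventually.of_forall fun s => norm_nonneg _)
            ((Stmt13Aux.expker_int t).mul_const _)
          exact Filter.Eventually.of_forall fun s => hpt s
      _ = (∫ s in Iic t, Real.exp (-(t - s))) * (M * (β * (a * ∫ y, |pderiv J i y|))) :=
          integral_mul_const _ _
      _ = M * (β * (a * ∫ y, |pderiv J i y|)) := by rw [Stmt13Aux.expker_one, one_mul]
      _ = a * β * (∫ y, |pderiv J i y|) * (k₁ * β * (a + hstar) + k₂) := by rw [hM]; ring
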